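/- Let f be a measurable function on a cube Q⁰ ⊂ ℝ^d with dyadic children ch(Q) for each Q ∈ 𝒟(Q⁰), let λ = 2^{−d−2}, set f₀ := f − m_f(Q⁰), and let {Q¹_j} be the maximal dyadic subcubes of Q⁰ such that max over children Q' of Q¹_j of |m_f(Q') − m_f(Q⁰)| exceeds (1_{Q⁰} f₀)*(λ|Q⁰|). Then ∑_j |Q¹_j| ≤ |Q⁰|/2. -/

import Mathlib

open MeasureTheory ENNReal

/-- The dyadic subcube of generation `n`, position `m` (with `m i < 2^n`) of the cube
with lower corner `a` and side `l`. For `n = 0`, `m = 0` this is the cube itself. -/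
def subCube (d : ℕ) (a : Fin d → ℝ) (l : ℝ) (n : ℕ) (m : Fin d → ℕ) :
    Set (Fin d → ℝ) :=
  {x | ∀ i, a i + (m i : ℝ) * l / 2 ^ n ≤ x i ∧
      x i < a i + ((m i : ℝ) + 1) * l / 2 ^ n}

/-- `c` is a median of `f` on `Q` (Lebesgue measure). -/
def IsMedian {d : ℕ} (f : (Fin d → ℝ) → ℝ) (Q : Set (Fin d → ℝ)) (c : ℝ) : Prop :=
  volume (Q ∩ {x | c < f x}) ≤ volume Q / 2 ∧
    volume (Q ∩ {x | f x < c}) ≤ volume Q / 2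

/-- Decreasing rearrangement `g*(t) = inf {α ≥ 0 : |{|g| > α}| ≤ t}`, in `ℝ≥0∞`. -/
noncomputable def rearr {d : ℕ} (g : (Fin d → ℝ) → ℝ) (t : ℝ≥0∞) : ℝ≥0∞ :=
  sInf {α : ℝ≥0∞ | volume {x | α < ENNReal.ofReal |g x|} ≤ t}


lemma subCube_eq_pi (d : ℕ) (a : Fin d → ℝ) (l : ℝ) (n : ℕ) (m : Fin d → ℕ) :
    subCube d a l n m = Set.univ.pi fun i =>
      Set.Ico (a i + (m i : ℝ) * l / 2 ^ n) (a i + ((m i : ℝ) + 1) * l / 2 ^ n) := by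
  ext x; simp [subCube, Set.mem_univ_pi]

lemma measurableSet_subCube (d : ℕ) (a : Fin d → ℝ) (l : ℝ) (n : ℕ) (m : Fin d → ℕ) :
    MeasurableSet (subCube d a l n m) := by
  rw [subCube_eq_pi]; exact MeasurableSet.univ_pi fun i => measurableSet_Ico

lemma volume_subCube (d : ℕ) (a : Fin d → ℝ) {l : ℝ} (hl : 0 < l) (n : ℕ) (m : Fin d → ℕ) :
    volume (subCube d a l n m) = ENNReal.ofReal ((l / 2 ^ n) ^ d) := by
  rw [subCube_eq_pi, volume_pi_pi]
  have : ∀ i : Fin d, volume (Set.Ico (a i + (m i : ℝ) * l / 2 ^ n)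
      (a i + ((m i : ℝ) + 1) * l / 2 ^ n)) = ENNReal.ofReal (l / 2 ^ n) := by
    intro i; rw [Real.volume_Ico]; ring_nf
  simp_rw [this]
  rw [Finset.prod_const, ← ENNReal.ofReal_pow (by positivity)]
  simp

lemma subCube_eq_of_mem {d : ℕ} {a : Fin d → ℝ} {l : ℝ} (hl : 0 < l) {n : ℕ}
    {m m₂ : Fin d → ℕ} {x : Fin d → ℝ} (h1 : x ∈ subCube d a l n m)
    (h2 : x ∈ subCube d a l n m₂) : m = m₂ := by
  funext i
  have key : ∀ (p q : Fin d → ℕ), x ∈ subCube d a l n p → x ∈ subCube d a l n q →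
      p i ≤ q i := by
    intro p q hp hq
    have h1 := (hp i).1
    have h2 := (hq i).2
    have hpos : (0:ℝ) < l / 2 ^ n := by positivity
    have : (p i : ℝ) * l / 2 ^ n < ((q i : ℝ) + 1) * l / 2 ^ n := by linarith
    have : (p i : ℝ) < (q i : ℝ) + 1 := by
      rw [mul_div_assoc, mul_div_assoc] at this
      exact lt_of_mul_lt_mul_right this hpos.le
    exact_mod_cast Nat.lt_succ_iff.mp (by exact_mod_cast this)
  exact le_antisymm (key m m₂ h1 h2) (key m₂ m h2 h1)

lemma subCube_child_subset {d : ℕ} {a : Fin d → ℝ} {l : ℝ} (hl : 0 < l) {n : ℕ}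
    (m' : Fin d → ℕ) :
    subCube d a l (n + 1) m' ⊆ subCube d a l n (fun i => m' i / 2) := by
  intro x hx i
  obtain ⟨h1, h2⟩ := hx i
  have e1 : (2 * (m' i / 2) : ℕ) ≤ m' i := Nat.mul_div_le (m' i) 2 |>.trans_eq rfl
  have e1 : ((m' i / 2 : ℕ) : ℝ) * 2 ≤ (m' i : ℝ) := by
    calc ((m' i / 2 : ℕ) : ℝ) * 2 = ((m' i / 2 * 2 : ℕ) : ℝ) := by push_cast; ring
      _ ≤ (m' i : ℝ) := by exact_mod_cast Nat.div_mul_le_self (m' i) 2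
  have e2 : (m' i : ℝ) + 1 ≤ (((m' i / 2 : ℕ) : ℝ) + 1) * 2 := by
    have : m' i + 1 ≤ (m' i / 2 + 1) * 2 := by omega
    exact_mod_cast this
  have hpos : (0:ℝ) < l / 2 ^ (n + 1) := by positivity
  constructor
  · calc a i + ((m' i / 2 : ℕ) : ℝ) * l / 2 ^ n
        = a i + (((m' i / 2 : ℕ) : ℝ) * 2) * l / 2 ^ (n + 1) := by ring
      _ ≤ a i + (m' i : ℝ) * l / 2 ^ (n + 1) := by
          have := mul_le_mul_of_nonneg_right e1 hpos.le
          rw [mul_div_assoc, mul_div_assoc]; linarith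
      _ ≤ x i := h1
  · calc x i < a i + ((m' i : ℝ) + 1) * l / 2 ^ (n + 1) := h2
      _ ≤ a i + ((((m' i / 2 : ℕ) : ℝ) + 1) * 2) * l / 2 ^ (n + 1) := by
          have := mul_le_mul_of_nonneg_right e2 hpos.le
          rw [mul_div_assoc, mul_div_assoc]; linarith
      _ = a i + (((m' i / 2 : ℕ) : ℝ) + 1) * l / 2 ^ n := by ring

lemma subCube_ancestor_subset {d : ℕ} {a : Fin d → ℝ} {l : ℝ} (hl : 0 < l) (n k : ℕ)
    (m' : Fin d → ℕ) :
    subCube d a l (n + k) m' ⊆ subCube d a l n (fun i => m' i / 2 ^ k) := by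
  induction k generalizing m' with
  | zero => simp
  | succ k ih =>
    have h1 : subCube d a l (n + (k + 1)) m' ⊆
        subCube d a l (n + k) (fun i => m' i / 2) :=
      subCube_child_subset (a := a) (n := n + k) hl m'
    refine h1.trans ((ih (fun i => m' i / 2)).trans ?_)
    have : (fun i => m' i / 2 / 2 ^ k) = fun i => m' i / 2 ^ (k + 1) := by
      funext i; rw [Nat.div_div_eq_div_mul, pow_succ, mul_comm]
    rw [this]

lemma subCube_subset_of_not_disjoint {d : ℕ} {a : Fin d → ℝ} {l : ℝ} (hl : 0 < l)
    {n k : ℕ} {m m' : Fin d → ℕ}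
    (h : ¬ Disjoint (subCube d a l n m) (subCube d a l (n + k) m')) :
    subCube d a l (n + k) m' ⊆ subCube d a l n m := by
  obtain ⟨x, hx1, hx2⟩ := Set.not_disjoint_iff.mp h
  have hx3 := subCube_ancestor_subset hl n k m' hx2
  have := subCube_eq_of_mem hl hx1 hx3
  rw [this]
  exact subCube_ancestor_subset hl n k m'

lemma half_lemma {X : Type*} [MeasureSpace X] {Q A B : Set X} (hQ : volume Q ≠ ∞)
    (hcover : Q ⊆ (Q ∩ A) ∪ (Q ∩ B)) (hB : volume (Q ∩ B) ≤ volume Q / 2) :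
    volume Q / 2 ≤ volume (Q ∩ A) := by
  have h1 : volume Q ≤ volume (Q ∩ A) + volume (Q ∩ B) :=
    (measure_mono hcover).trans (measure_union_le _ _)
  have h2 : volume Q ≤ volume (Q ∩ A) + volume Q / 2 :=
    h1.trans (add_le_add le_rfl hB)
  have h3 : volume Q - volume Q / 2 ≤ volume (Q ∩ A) :=
    tsub_le_iff_right.mpr h2
  rwa [ENNReal.sub_half hQ] at h3

lemma rearr_lt {d : ℕ} (g : (Fin d → ℝ) → ℝ) (t : ℝ≥0∞) :
    volume {x | rearr g t < ENNReal.ofReal |g x|} ≤ t := by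
  set A : Set ℝ≥0∞ := {α : ℝ≥0∞ | volume {x | α < ENNReal.ofReal |g x|} ≤ t} with hA
  set s : ℝ≥0∞ := sInf A with hs
  have hrearr : rearr g t = s := rfl
  rw [hrearr]
  by_cases hstop : s = ∞
  · rw [hstop]
    have : {x | (∞:ℝ≥0∞) < ENNReal.ofReal |g x|} = ∅ := by
      ext x; simp
    simp [this]
  -- A is upward closed
  have hup : ∀ α ∈ A, ∀ β, α ≤ β → β ∈ A := by
    intro α hα β hαβ
    exact le_trans (measure_mono fun x hx => lt_of_le_of_lt hαβ hx) hα
  set B : ℕ → Set (Fin d → ℝ) := fun n => {x | s + (n : ℝ≥0∞)⁻¹ < ENNReal.ofReal |g x|}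
    with hB
  have hBmem : ∀ n, volume (B n) ≤ t := by
    intro n
    rcases eq_or_ne (n : ℝ≥0∞) 0 with h0 | h0
    · have : B n = ∅ := by
        ext x
        simp only [hB, Set.mem_setOf_eq, Set.mem_empty_iff_false, iff_false, not_lt, h0]
        rw [ENNReal.inv_zero, add_top]
        exact le_top
      simp [this]
    · have hlt : s < s + (n : ℝ≥0∞)⁻¹ :=
        ENNReal.lt_add_right hstop (ENNReal.inv_ne_zero.mpr (natCast_ne_top n))
      obtain ⟨α, hαA, hαlt⟩ := sInf_lt_iff.mp hlt
      exact hup α hαA _ hαlt.le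
  have hsub : {x | s < ENNReal.ofReal |g x|} ⊆ ⋃ n, B n := by
    intro x hx
    have hpos : (0:ℝ≥0∞) < ENNReal.ofReal |g x| - s := tsub_pos_iff_lt.mpr hx
    obtain ⟨n, hn⟩ := ENNReal.exists_inv_nat_lt hpos.ne'
    refine Set.mem_iUnion.mpr ⟨n, ?_⟩
    have : s + (n : ℝ≥0∞)⁻¹ < s + (ENNReal.ofReal |g x| - s) :=
      ENNReal.add_lt_add_left hstop hn
    rwa [add_tsub_cancel_of_le hx.le] at this
  have hmono : Monotone B := by
    intro i j hij x hx
    simp only [hB, Set.mem_setOf_eq] at hx ⊢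
    refine lt_of_le_of_lt ?_ hx
    exact add_le_add le_rfl (ENNReal.inv_le_inv.mpr (Nat.cast_le.mpr hij))
  calc volume {x | s < ENNReal.ofReal |g x|} ≤ volume (⋃ n, B n) := measure_mono hsub
    _ = ⨆ n, volume (B n) := (hmono.directed_le).measure_iUnion
    _ ≤ t := iSup_le hBmem

/-- if `med` assigns to each dyadic subcube of `Q⁰` a median of `f`, and
`{Q¹_j}` are the maximal dyadic subcubes of `Q⁰` such that some child `Q'` satisfies
`|m_f(Q') − m_f(Q⁰)| > (1_{Q⁰} f₀)*(λ|Q⁰|)` with `λ = 2^{−d−2}`, `f₀ = f − m_f(Q⁰)`,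
then `∑_j |Q¹_j| ≤ |Q⁰|/2`. -/
theorem stmt17 (d : ℕ) (a : Fin d → ℝ) (l : ℝ) (hl : 0 < l)
    (f : (Fin d → ℝ) → ℝ) (hf : Measurable f)
    (med : ℕ → (Fin d → ℕ) → ℝ)
    (hmed : ∀ n m, (∀ i, m i < 2 ^ n) → IsMedian f (subCube d a l n m) (med n m)) :
    let Q0 := subCube d a l 0 fun _ => 0
    let thr := rearr (Q0.indicator fun x => f x - med 0 fun _ => 0)
      (ENNReal.ofReal (1 / 2 ^ (d + 2)) * volume Q0)
    let S : Set (ℕ × (Fin d → ℕ)) :=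
      {q | (∀ i, q.2 i < 2 ^ q.1) ∧
        ∃ m' : Fin d → ℕ, (∀ i, m' i / 2 = q.2 i) ∧
          thr < ENNReal.ofReal |med (q.1 + 1) m' - med 0 fun _ => 0|}
    (∑' q : {q // q ∈ S ∧ ∀ r ∈ S,
          subCube d a l q.1 q.2 ⊆ subCube d a l r.1 r.2 → q = r},
        volume (subCube d a l q.1.1 q.1.2))
      ≤ volume Q0 / 2 := by
  intro Q0 thr S
  set c0 : ℝ := med 0 fun _ => 0 with hc0
  set g : (Fin d → ℝ) → ℝ := Q0.indicator fun x => f x - c0 with hg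
  set t : ℝ≥0∞ := ENNReal.ofReal (1 / 2 ^ (d + 2)) * volume Q0 with ht
  set Bad : Set (Fin d → ℝ) := {x | thr < ENNReal.ofReal |g x|} with hBad
  have hBadle : volume Bad ≤ t := rearr_lt g t
  -- the index type
  set J := {q // q ∈ S ∧ ∀ r ∈ S,
      subCube d a l q.1 q.2 ⊆ subCube d a l r.1 r.2 → q = r} with hJ
  -- key: for each selected cube, a large subset of Bad inside it
  have key : ∀ q : J, ∃ E : Set (Fin d → ℝ), MeasurableSet E ∧
      E ⊆ subCube d a l q.1.1 q.1.2 ∧ E ⊆ Bad ∧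
      volume (subCube d a l q.1.1 q.1.2) ≤ 2 ^ (d + 1) * volume E := by
    rintro ⟨⟨n, m⟩, ⟨⟨hvalid, m', hm', hthr⟩, -⟩⟩
    dsimp only at *
    have hm'lt : ∀ i, m' i < 2 ^ (n + 1) := by
      intro i
      have h1 : m' i / 2 < 2 ^ n := (hm' i) ▸ hvalid i
      have := (Nat.div_lt_iff_lt_mul (by norm_num : 0 < 2)).mp h1
      omega
    set c' : ℝ := med (n + 1) m' with hc'
    have hmed' : IsMedian f (subCube d a l (n + 1) m') c' := hmed (n + 1) m' hm'lt
    set Q' : Set (Fin d → ℝ) := subCube d a l (n + 1) m' with hQ'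
    have hQ'vol : volume Q' = ENNReal.ofReal ((l / 2 ^ (n + 1)) ^ d) :=
      volume_subCube d a hl (n + 1) m'
    have hQ'fin : volume Q' ≠ ∞ := by rw [hQ'vol]; exact ENNReal.ofReal_ne_top
    have hQ'Q0 : Q' ⊆ Q0 := by
      have h := subCube_ancestor_subset (a := a) hl 0 (n + 1) m'
      have hzero : (fun i => m' i / 2 ^ (n + 1)) = (fun _ : Fin d => 0) := by
        funext i; exact Nat.div_eq_of_lt (hm'lt i)
      rw [hzero] at h
      simpa using h
    have hQ'Q : Q' ⊆ subCube d a l n m := by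
      have h := subCube_ancestor_subset (a := a) hl n 1 m'
      have : (fun i => m' i / 2 ^ 1) = m := by funext i; simpa using hm' i
      rw [this] at h
      simpa using h
    -- volume relation: volume Q = 2^d * volume Q'
    have hQvol : volume (subCube d a l n m) = 2 ^ d * volume Q' := by
      rw [hQ'vol, volume_subCube d a hl n m]
      have harit : (l / 2 ^ n) ^ d = 2 ^ d * (l / 2 ^ (n + 1)) ^ d := by
        rw [← mul_pow]
        congr 1
        field_simp
        ring
      rw [harit, ENNReal.ofReal_mul (by positivity), ENNReal.ofReal_pow (by norm_num)]
      norm_num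
    -- case split on sign of c' - c0
    rcases le_or_gt c0 c' with hcc | hcc
    · refine ⟨Q' ∩ {x | c' ≤ f x}, (measurableSet_subCube _ _ _ _ _).inter
        (measurableSet_le measurable_const hf), (Set.inter_subset_left).trans hQ'Q, ?_, ?_⟩
      · intro x hx
        have hxQ0 : x ∈ Q0 := hQ'Q0 hx.1
        have hgx : g x = f x - c0 := Set.indicator_of_mem hxQ0 _
        have habs : |c' - c0| ≤ |g x| := by
          rw [hgx, abs_of_nonneg (sub_nonneg.mpr hcc)]
          have : c' - c0 ≤ f x - c0 := by have := hx.2; simp only [Set.mem_setOf_eq] at this; linarith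
          exact this.trans (le_abs_self _)
        exact lt_of_lt_of_le hthr (ENNReal.ofReal_le_ofReal habs)
      · have hhalf : volume Q' / 2 ≤ volume (Q' ∩ {x | c' ≤ f x}) := by
          refine half_lemma hQ'fin ?_ hmed'.2
          intro x hx
          rcases le_or_gt c' (f x) with h | h
          · exact Or.inl ⟨hx, h⟩
          · exact Or.inr ⟨hx, h⟩
        have h2 : volume Q' ≤ 2 * volume (Q' ∩ {x | c' ≤ f x}) := by
          calc volume Q' = volume Q' / 2 * 2 := by
                rw [ENNReal.div_mul_cancel (by norm_num) (by norm_num)]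
            _ ≤ volume (Q' ∩ {x | c' ≤ f x}) * 2 := by gcongr
            _ = 2 * volume (Q' ∩ {x | c' ≤ f x}) := mul_comm _ _
        calc volume (subCube d a l n m) = 2 ^ d * volume Q' := hQvol
          _ ≤ 2 ^ d * (2 * volume (Q' ∩ {x | c' ≤ f x})) := by gcongr
          _ = 2 ^ (d + 1) * volume (Q' ∩ {x | c' ≤ f x}) := by ring
    · refine ⟨Q' ∩ {x | f x ≤ c'}, (measurableSet_subCube _ _ _ _ _).inter
        (measurableSet_le hf measurable_const), (Set.inter_subset_left).trans hQ'Q, ?_, ?_⟩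
      · intro x hx
        have hxQ0 : x ∈ Q0 := hQ'Q0 hx.1
        have hgx : g x = f x - c0 := Set.indicator_of_mem hxQ0 _
        have habs : |c' - c0| ≤ |g x| := by
          rw [hgx, abs_of_neg (sub_neg.mpr hcc)]
          have hfx : f x ≤ c' := hx.2
          have : -(c' - c0) ≤ -(f x - c0) := by linarith
          exact this.trans (neg_le_abs _)
        exact lt_of_lt_of_le hthr (ENNReal.ofReal_le_ofReal habs)
      · have hhalf : volume Q' / 2 ≤ volume (Q' ∩ {x | f x ≤ c'}) := by
          refine half_lemma hQ'fin ?_ hmed'.1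
          intro x hx
          rcases le_or_gt (f x) c' with h | h
          · exact Or.inl ⟨hx, h⟩
          · exact Or.inr ⟨hx, h⟩
        have h2 : volume Q' ≤ 2 * volume (Q' ∩ {x | f x ≤ c'}) := by
          calc volume Q' = volume Q' / 2 * 2 := by
                rw [ENNReal.div_mul_cancel (by norm_num) (by norm_num)]
            _ ≤ volume (Q' ∩ {x | f x ≤ c'}) * 2 := by gcongr
            _ = 2 * volume (Q' ∩ {x | f x ≤ c'}) := mul_comm _ _
        calc volume (subCube d a l n m) = 2 ^ d * volume Q' := hQvol
          _ ≤ 2 ^ d * (2 * volume (Q' ∩ {x | f x ≤ c'})) := by gcongr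
          _ = 2 ^ (d + 1) * volume (Q' ∩ {x | f x ≤ c'}) := by ring
  choose E hEmeas hEcube hEBad hEvol using key
  -- pairwise disjointness of the maximal cubes, hence of the E's
  have hcube_disj : ∀ q r : J, q ≠ r →
      Disjoint (subCube d a l q.1.1 q.1.2) (subCube d a l r.1.1 r.1.2) := by
    intro q r hqr
    by_contra hnd
    rcases le_total q.1.1 r.1.1 with hle | hle
    · obtain ⟨k, hk⟩ := Nat.le.dest hle
      have hsub : subCube d a l r.1.1 r.1.2 ⊆ subCube d a l q.1.1 q.1.2 := by
        have := subCube_subset_of_not_disjoint (a := a) hl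
          (n := q.1.1) (k := k) (m := q.1.2) (m' := r.1.2)
        rw [hk] at this
        exact this (by simpa using hnd)
      exact hqr (Subtype.ext (r.2.2 q.1 q.2.1 hsub)).symm
    · obtain ⟨k, hk⟩ := Nat.le.dest hle
      have hsub : subCube d a l q.1.1 q.1.2 ⊆ subCube d a l r.1.1 r.1.2 := by
        have := subCube_subset_of_not_disjoint (a := a) hl
          (n := r.1.1) (k := k) (m := r.1.2) (m' := q.1.2)
        rw [hk] at this
        exact this (by simpa [disjoint_comm] using hnd)
      exact hqr (Subtype.ext (q.2.2 r.1 r.2.1 hsub))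
  have hEdisj : Pairwise (Function.onFun Disjoint E) := fun q r hqr =>
    Set.disjoint_of_subset (hEcube q) (hEcube r) (hcube_disj q r hqr)
  -- put it together
  have hunion : volume (⋃ q : J, E q) = ∑' q : J, volume (E q) :=
    measure_iUnion hEdisj hEmeas
  have hfinal : (∑' q : J, volume (subCube d a l q.1.1 q.1.2)) ≤ 2 ^ (d + 1) * t := by
    calc (∑' q : J, volume (subCube d a l q.1.1 q.1.2))
        ≤ ∑' q : J, 2 ^ (d + 1) * volume (E q) := ENNReal.tsum_le_tsum hEvol
      _ = 2 ^ (d + 1) * ∑' q : J, volume (E q) := ENNReal.tsum_mul_left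
      _ = 2 ^ (d + 1) * volume (⋃ q : J, E q) := by rw [hunion]
      _ ≤ 2 ^ (d + 1) * volume Bad := by
          gcongr
          exact Set.iUnion_subset hEBad
      _ ≤ 2 ^ (d + 1) * t := by gcongr
  refine hfinal.trans ?_
  rw [ht]
  have : (2 : ℝ≥0∞) ^ (d + 1) * (ENNReal.ofReal (1 / 2 ^ (d + 2)) * volume Q0)
      = (2 ^ (d + 1) * ENNReal.ofReal (1 / 2 ^ (d + 2))) * volume Q0 := by ring
  rw [this]
  have h2 : (2 : ℝ≥0∞) ^ (d + 1) * ENNReal.ofReal (1 / 2 ^ (d + 2)) = 1 / 2 := by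
    have : (2 : ℝ≥0∞) ^ (d + 1) = ENNReal.ofReal (2 ^ (d + 1)) := by
      rw [ENNReal.ofReal_pow (by norm_num)]
      norm_num
    rw [this, ← ENNReal.ofReal_mul (by positivity)]
    have : (2 : ℝ) ^ (d + 1) * (1 / 2 ^ (d + 2)) = 1 / 2 := by
      rw [pow_succ]
      field_simp
      ring
    rw [this]
    rw [ENNReal.ofReal_div_of_pos (by norm_num)]
    norm_num
  rw [h2, one_div, ENNReal.div_eq_inv_mul]
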